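/- arXiv:2005.12013 — 3 statements merged into one kernel-verified Lean document; each statement's English description precedes it below -/
import Mathlib

section
/- Define Γ: {(x,y) ∈ ℝ² : x² + y² < 1} → ℝ by Γ(x,y) = (x² + y²)^{1/2} · (−(1/2)·ln(x² + y²))^{−3/2} for 0 < x² + y² < 1 and Γ(0,0) = 0. Then Γ is continuously differentiable on the open unit disk, Γ(0,0) = 0, and both partial derivatives of Γ at the origin are zero (so the total derivative of Γ at the origin is the zero map). -/
open Set Filter

noncomputable section

/-- The function `Γ(x,y) = (x²+y²)^{1/2} ⬝ (−(1/2) ln(x²+y²))^{−3/2}` for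
`x²+y² ≠ 0`, and `Γ(0,0) = 0`. -/
noncomputable def GammaFn (p : ℝ × ℝ) : ℝ :=
  if p.1 ^ 2 + p.2 ^ 2 = 0 then 0
  else (p.1 ^ 2 + p.2 ^ 2) ^ ((1 : ℝ) / 2) *
    (-(1 / 2) * Real.log (p.1 ^ 2 + p.2 ^ 2)) ^ (-(3 : ℝ) / 2)

namespace Stmt8Aux

open Real Topology

/-- Auxiliary inner factor. -/
noncomputable def L (t : ℝ) : ℝ := -(1 / 2) * Real.log t

/-- The one-variable profile of `GammaFn`. -/
noncomputable def g (t : ℝ) : ℝ := t ^ ((1 : ℝ) / 2) * L t ^ (-(3 : ℝ) / 2)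

/-- Its derivative on `(0,1)`. -/
noncomputable def D (t : ℝ) : ℝ :=
  t ^ (-(1 : ℝ) / 2) * ((1 / 2) * L t ^ (-(3 : ℝ) / 2) + (3 / 4) * L t ^ (-(5 : ℝ) / 2))

lemma gamma_eq : GammaFn = fun p : ℝ × ℝ => g (p.1 ^ 2 + p.2 ^ 2) := by
  funext p
  unfold GammaFn g L
  split_ifs with h
  · rw [h]
    rw [Real.log_zero]
    norm_num [Real.zero_rpow]
  · rfl

lemma sq_pos_of_ne {p : ℝ × ℝ} (hp : p ≠ 0) : 0 < p.1 ^ 2 + p.2 ^ 2 := by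
  rcases eq_or_lt_of_le (by positivity : (0 : ℝ) ≤ p.1 ^ 2 + p.2 ^ 2) with h | h
  · exfalso
    apply hp
    have h1 : p.1 = 0 := by nlinarith [sq_nonneg p.1, sq_nonneg p.2]
    have h2 : p.2 = 0 := by nlinarith [sq_nonneg p.1, sq_nonneg p.2]
    exact Prod.ext h1 h2
  · exact h

lemma L_pos {t : ℝ} (ht : 0 < t) (ht1 : t < 1) : 0 < L t := by
  have h := Real.log_neg ht ht1
  unfold L
  nlinarith

lemma hasDerivAt_g {t : ℝ} (ht : 0 < t) (ht1 : t < 1) : HasDerivAt g (D t) t := by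
  have hL : 0 < L t := L_pos ht ht1
  have h1 : HasDerivAt (fun t : ℝ => t ^ ((1 : ℝ) / 2)) ((1 / 2) * t ^ ((1 : ℝ) / 2 - 1)) t :=
    Real.hasDerivAt_rpow_const (Or.inl ht.ne')
  have hL' : HasDerivAt L (-(1 / 2) * t⁻¹) t := (Real.hasDerivAt_log ht.ne').const_mul _
  have h2 : HasDerivAt (fun s => L s ^ (-(3 : ℝ) / 2))
      ((-(3 : ℝ) / 2) * L t ^ (-(3 : ℝ) / 2 - 1) * (-(1 / 2) * t⁻¹)) t :=
    (Real.hasDerivAt_rpow_const (p := -(3 : ℝ) / 2) (Or.inl hL.ne')).comp t hL'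
  have h3 := h1.mul h2
  convert h3 using 1
  on_goal 1 => exact rfl
  on_goal 1 => exact rfl
  on_goal 1 => exact rfl
  unfold D
  have e1 : t ^ ((1 : ℝ) / 2 - 1) = t ^ (-(1 : ℝ) / 2) := by norm_num
  have e2 : L t ^ (-(3 : ℝ) / 2 - 1) = L t ^ (-(5 : ℝ) / 2) := by norm_num
  have e3 : t ^ ((1 : ℝ) / 2) * t⁻¹ = t ^ (-(1 : ℝ) / 2) := by
    rw [← Real.rpow_neg_one t, ← Real.rpow_add ht]
    try norm_num
  rw [e1, e2]
  have expand : t ^ ((1 : ℝ) / 2) * ((-(3 : ℝ) / 2) * L t ^ (-(5 : ℝ) / 2) * (-(1 / 2) * t⁻¹))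
      = (3 / 4) * (t ^ ((1 : ℝ) / 2) * t⁻¹) * L t ^ (-(5 : ℝ) / 2) := by ring
  calc t ^ (-(1 : ℝ) / 2) * ((1 / 2) * L t ^ (-(3 : ℝ) / 2) + (3 / 4) * L t ^ (-(5 : ℝ) / 2))
      = (1 / 2) * t ^ (-(1 : ℝ) / 2) * L t ^ (-(3 : ℝ) / 2)
        + (3 / 4) * (t ^ (-(1 : ℝ) / 2)) * L t ^ (-(5 : ℝ) / 2) := by ring
    _ = _ := by rw [← e3, expand]; try ring

/-- Derivative of `p ↦ p.1² + p.2²`. -/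
noncomputable def Dmap (p : ℝ × ℝ) : ℝ × ℝ →L[ℝ] ℝ :=
  (2 * p.1) • ContinuousLinearMap.fst ℝ ℝ ℝ + (2 * p.2) • ContinuousLinearMap.snd ℝ ℝ ℝ

lemma hasFDerivAt_sq (p : ℝ × ℝ) :
    HasFDerivAt (fun q : ℝ × ℝ => q.1 ^ 2 + q.2 ^ 2) (Dmap p) p := by
  have h1 : HasFDerivAt (fun q : ℝ × ℝ => q.1 * q.1 + q.2 * q.2)
      ((p.1 • ContinuousLinearMap.fst ℝ ℝ ℝ + p.1 • ContinuousLinearMap.fst ℝ ℝ ℝ)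
        + (p.2 • ContinuousLinearMap.snd ℝ ℝ ℝ + p.2 • ContinuousLinearMap.snd ℝ ℝ ℝ)) p :=
    (hasFDerivAt_fst.mul hasFDerivAt_fst).add (hasFDerivAt_snd.mul hasFDerivAt_snd)
  have h2 : HasFDerivAt (fun q : ℝ × ℝ => q.1 ^ 2 + q.2 ^ 2)
      ((p.1 • ContinuousLinearMap.fst ℝ ℝ ℝ + p.1 • ContinuousLinearMap.fst ℝ ℝ ℝ)
        + (p.2 • ContinuousLinearMap.snd ℝ ℝ ℝ + p.2 • ContinuousLinearMap.snd ℝ ℝ ℝ)) p := by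
    simpa only [pow_two] using h1
  convert h2 using 1
  unfold Dmap
  ext <;> simp <;> try ring

lemma hasFDerivAt_Gamma {p : ℝ × ℝ} (h0 : 0 < p.1 ^ 2 + p.2 ^ 2) (h1 : p.1 ^ 2 + p.2 ^ 2 < 1) :
    HasFDerivAt GammaFn (D (p.1 ^ 2 + p.2 ^ 2) • Dmap p) p := by
  rw [gamma_eq]
  exact (hasDerivAt_g h0 h1).comp_hasFDerivAt p (hasFDerivAt_sq p)

lemma norm_Dmap_le (p : ℝ × ℝ) : ‖Dmap p‖ ≤ 2 * |p.1| + 2 * |p.2| := by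
  apply ContinuousLinearMap.opNorm_le_bound _ (by positivity)
  intro q
  have hq1 : |q.1| ≤ ‖q‖ := norm_fst_le q
  have hq2 : |q.2| ≤ ‖q‖ := norm_snd_le q
  have : Dmap p q = 2 * p.1 * q.1 + 2 * p.2 * q.2 := by
    unfold Dmap
    simp
    try ring
  rw [this]
  have habs : |2 * p.1 * q.1 + 2 * p.2 * q.2| ≤ 2 * |p.1| * |q.1| + 2 * |p.2| * |q.2| := by
    calc |2 * p.1 * q.1 + 2 * p.2 * q.2| ≤ |2 * p.1 * q.1| + |2 * p.2 * q.2| := abs_add_le _ _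
      _ = 2 * |p.1| * |q.1| + 2 * |p.2| * |q.2| := by
          rw [abs_mul, abs_mul, abs_mul, abs_mul]
          simp [abs_of_nonneg]
          try ring
  have hnorm : ‖(2 * p.1 * q.1 + 2 * p.2 * q.2 : ℝ)‖ = |2 * p.1 * q.1 + 2 * p.2 * q.2| :=
    Real.norm_eq_abs _
  rw [hnorm]
  have h1 : 2 * |p.1| * |q.1| ≤ 2 * |p.1| * ‖q‖ := by
    apply mul_le_mul_of_nonneg_left hq1 (by positivity)
  have h2 : 2 * |p.2| * |q.2| ≤ 2 * |p.2| * ‖q‖ := by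
    apply mul_le_mul_of_nonneg_left hq2 (by positivity)
  nlinarith [norm_nonneg q, abs_nonneg p.1, abs_nonneg p.2]

lemma abs_le_sqrt_sq (p : ℝ × ℝ) : |p.1| ≤ Real.sqrt (p.1 ^ 2 + p.2 ^ 2) ∧
    |p.2| ≤ Real.sqrt (p.1 ^ 2 + p.2 ^ 2) := by
  constructor
  · rw [← Real.sqrt_sq_eq_abs]
    exact Real.sqrt_le_sqrt (by nlinarith [sq_nonneg p.2])
  · rw [← Real.sqrt_sq_eq_abs]
    exact Real.sqrt_le_sqrt (by nlinarith [sq_nonneg p.1])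

lemma norm_fderiv_le {p : ℝ × ℝ} (h0 : 0 < p.1 ^ 2 + p.2 ^ 2) (h1 : p.1 ^ 2 + p.2 ^ 2 < 1) :
    ‖D (p.1 ^ 2 + p.2 ^ 2) • Dmap p‖ ≤
      2 * L (p.1 ^ 2 + p.2 ^ 2) ^ (-(3 : ℝ) / 2) + 3 * L (p.1 ^ 2 + p.2 ^ 2) ^ (-(5 : ℝ) / 2) := by
  set t := p.1 ^ 2 + p.2 ^ 2 with ht
  have hL : 0 < L t := L_pos h0 h1
  have hD : 0 ≤ D t := by
    unfold D
    have := Real.rpow_nonneg hL.le (-(3 : ℝ) / 2)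
    have := Real.rpow_nonneg hL.le (-(5 : ℝ) / 2)
    have := Real.rpow_nonneg h0.le (-(1 : ℝ) / 2)
    positivity
  have hsqrt : Real.sqrt t = t ^ ((1 : ℝ) / 2) := Real.sqrt_eq_rpow t
  have hDm : ‖Dmap p‖ ≤ 4 * t ^ ((1 : ℝ) / 2) := by
    have h1' := (abs_le_sqrt_sq p).1
    have h2' := (abs_le_sqrt_sq p).2
    rw [hsqrt] at h1' h2'
    calc ‖Dmap p‖ ≤ 2 * |p.1| + 2 * |p.2| := norm_Dmap_le p
      _ ≤ 4 * t ^ ((1 : ℝ) / 2) := by nlinarith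
  have hcancel : t ^ (-(1 : ℝ) / 2) * t ^ ((1 : ℝ) / 2) = 1 := by
    rw [← Real.rpow_add h0]
    norm_num
  calc ‖D t • Dmap p‖ = |D t| * ‖Dmap p‖ := by
        have hns := norm_smul (D t) (Dmap p)
        rw [hns]
        simp
    _ = D t * ‖Dmap p‖ := by rw [abs_of_nonneg hD]
    _ ≤ D t * (4 * t ^ ((1 : ℝ) / 2)) := mul_le_mul_of_nonneg_left hDm hD
    _ = (t ^ (-(1 : ℝ) / 2) * t ^ ((1 : ℝ) / 2)) *
          (4 * ((1 / 2) * L t ^ (-(3 : ℝ) / 2) + (3 / 4) * L t ^ (-(5 : ℝ) / 2))) := by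
        unfold D; ring
    _ = 2 * L t ^ (-(3 : ℝ) / 2) + 3 * L t ^ (-(5 : ℝ) / 2) := by rw [hcancel]; ring

lemma tendsto_sq_zero : Tendsto (fun p : ℝ × ℝ => p.1 ^ 2 + p.2 ^ 2) (𝓝 0) (𝓝 0) := by
  have hc : Continuous (fun p : ℝ × ℝ => p.1 ^ 2 + p.2 ^ 2) :=
    (continuous_fst.pow 2).add (continuous_snd.pow 2)
  have := hc.tendsto (0 : ℝ × ℝ)
  simpa using this

lemma tendsto_L_atTop :
    Tendsto (fun p : ℝ × ℝ => L (p.1 ^ 2 + p.2 ^ 2)) (𝓝[≠] (0 : ℝ × ℝ)) atTop := by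
  have hs : Tendsto (fun p : ℝ × ℝ => p.1 ^ 2 + p.2 ^ 2) (𝓝[≠] (0 : ℝ × ℝ)) (𝓝[>] (0 : ℝ)) := by
    rw [tendsto_nhdsWithin_iff]
    refine ⟨tendsto_sq_zero.mono_left nhdsWithin_le_nhds, ?_⟩
    filter_upwards [self_mem_nhdsWithin] with p hp
    exact sq_pos_of_ne hp
  have hlog : Tendsto (fun p : ℝ × ℝ => Real.log (p.1 ^ 2 + p.2 ^ 2)) (𝓝[≠] (0 : ℝ × ℝ)) atBot :=
    Real.tendsto_log_nhdsGT_zero.comp hs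
  have hneg : Tendsto (fun p : ℝ × ℝ => -Real.log (p.1 ^ 2 + p.2 ^ 2)) (𝓝[≠] (0 : ℝ × ℝ)) atTop :=
    tendsto_neg_atBot_atTop.comp hlog
  have := hneg.const_mul_atTop (r := (1 : ℝ) / 2) (by norm_num)
  unfold L
  convert this using 2
  ring

lemma tendsto_L_rpow {a : ℝ} (ha : 0 < a) :
    Tendsto (fun p : ℝ × ℝ => L (p.1 ^ 2 + p.2 ^ 2) ^ (-a)) (𝓝[≠] (0 : ℝ × ℝ)) (𝓝 0) :=
  (tendsto_rpow_neg_atTop ha).comp tendsto_L_atTop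

lemma eventually_lt_one : ∀ᶠ p : ℝ × ℝ in 𝓝 0, p.1 ^ 2 + p.2 ^ 2 < 1 :=
  tendsto_sq_zero.eventually_lt_const (by norm_num)

lemma hasFDerivAt_zero : HasFDerivAt GammaFn (0 : ℝ × ℝ →L[ℝ] ℝ) 0 := by
  rw [gamma_eq, hasFDerivAt_iff_isLittleO_nhds_zero]
  simp only [zero_add, ContinuousLinearMap.zero_apply]
  have hval : g ((0 : ℝ × ℝ).1 ^ 2 + (0 : ℝ × ℝ).2 ^ 2) = 0 := by
    norm_num [g, L, Real.log_zero, Real.zero_rpow]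
  rw [Asymptotics.isLittleO_iff]
  intro c hc
  rw [show (𝓝 (0 : ℝ × ℝ)) = 𝓝[≠] (0 : ℝ × ℝ) ⊔ pure 0 from
    (nhdsNE_sup_pure 0).symm, eventually_sup, eventually_pure]
  constructor
  · have hsmall : ∀ᶠ p : ℝ × ℝ in 𝓝[≠] (0 : ℝ × ℝ),
        L (p.1 ^ 2 + p.2 ^ 2) ^ (-(3 : ℝ) / 2) < c / Real.sqrt 2 := by
      have h := tendsto_L_rpow (a := (3 : ℝ) / 2) (by norm_num)
      have : (-(3 : ℝ) / 2) = -((3 : ℝ) / 2) := by norm_num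
      rw [this]
      exact h.eventually_lt_const (by positivity)
    filter_upwards [hsmall, eventually_lt_one.filter_mono nhdsWithin_le_nhds,
      self_mem_nhdsWithin] with p hp hp1 hpne
    have h0 : 0 < p.1 ^ 2 + p.2 ^ 2 := sq_pos_of_ne hpne
    set t := p.1 ^ 2 + p.2 ^ 2 with ht
    have hL : 0 < L t := L_pos h0 hp1
    have hLpow : 0 ≤ L t ^ (-(3 : ℝ) / 2) := Real.rpow_nonneg hL.le _
    have hsq : t ^ ((1 : ℝ) / 2) ≤ Real.sqrt 2 * ‖p‖ := by
      rw [← Real.sqrt_eq_rpow]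
      have hb : t ≤ 2 * ‖p‖ ^ 2 := by
        have h1 : |p.1| ≤ ‖p‖ := norm_fst_le p
        have h2 : |p.2| ≤ ‖p‖ := norm_snd_le p
        have := abs_nonneg p.1
        have := abs_nonneg p.2
        nlinarith [sq_abs p.1, sq_abs p.2]
      calc Real.sqrt t ≤ Real.sqrt (2 * ‖p‖ ^ 2) := Real.sqrt_le_sqrt hb
        _ = Real.sqrt 2 * ‖p‖ := by
            rw [Real.sqrt_mul (by norm_num), Real.sqrt_sq (norm_nonneg p)]
    have hgval : g t = t ^ ((1 : ℝ) / 2) * L t ^ (-(3 : ℝ) / 2) := rfl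
    have hnonneg : (0 : ℝ) ≤ t ^ ((1 : ℝ) / 2) := Real.rpow_nonneg h0.le _
    simp only [hval, hgval, sub_zero, Real.norm_eq_abs]
    rw [abs_of_nonneg (mul_nonneg hnonneg hLpow)]
    have hs2 : (0 : ℝ) < Real.sqrt 2 := by positivity
    calc t ^ ((1 : ℝ) / 2) * L t ^ (-(3 : ℝ) / 2)
        ≤ (Real.sqrt 2 * ‖p‖) * (c / Real.sqrt 2) := by
          apply mul_le_mul hsq hp.le hLpow (by positivity)
      _ = c * ‖p‖ := by field_simp
  · rw [hval, sub_zero]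
    simp

lemma fderiv_zero : fderiv ℝ GammaFn 0 = 0 := hasFDerivAt_zero.fderiv

lemma tendsto_fderiv_zero : Tendsto (fderiv ℝ GammaFn) (𝓝 0) (𝓝 0) := by
  rw [show (𝓝 (0 : ℝ × ℝ)) = 𝓝[≠] (0 : ℝ × ℝ) ⊔ pure 0 from
    (nhdsNE_sup_pure 0).symm, tendsto_sup]
  constructor
  · apply squeeze_zero_norm'
      (a := fun p : ℝ × ℝ => 2 * L (p.1 ^ 2 + p.2 ^ 2) ^ (-(3 : ℝ) / 2)
        + 3 * L (p.1 ^ 2 + p.2 ^ 2) ^ (-(5 : ℝ) / 2))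
    · filter_upwards [eventually_lt_one.filter_mono nhdsWithin_le_nhds,
        self_mem_nhdsWithin] with p hp1 hpne
      have h0 : 0 < p.1 ^ 2 + p.2 ^ 2 := sq_pos_of_ne hpne
      rw [(hasFDerivAt_Gamma h0 hp1).fderiv]
      exact norm_fderiv_le h0 hp1
    · have h3 := tendsto_L_rpow (a := (3 : ℝ) / 2) (by norm_num)
      have h5 := tendsto_L_rpow (a := (5 : ℝ) / 2) (by norm_num)
      have e3 : -((3 : ℝ) / 2) = -(3 : ℝ) / 2 := by norm_num
      have e5 : -((5 : ℝ) / 2) = -(5 : ℝ) / 2 := by norm_num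
      rw [e3] at h3
      rw [e5] at h5
      have := (h3.const_mul 2).add (h5.const_mul 3)
      simpa using this
  · have := tendsto_pure_nhds (fderiv ℝ GammaFn) 0
    rwa [fderiv_zero] at this

lemma contDiffOn_punctured :
    ContDiffOn ℝ 2 GammaFn {q : ℝ × ℝ | 0 < q.1 ^ 2 + q.2 ^ 2 ∧ q.1 ^ 2 + q.2 ^ 2 < 1} := by
  rw [gamma_eq]
  intro q hq
  apply ContDiffAt.contDiffWithinAt
  have hsq : ContDiffAt ℝ 2 (fun p : ℝ × ℝ => p.1 ^ 2 + p.2 ^ 2) q :=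
    ((contDiff_fst.pow 2).add (contDiff_snd.pow 2)).contDiffAt
  have hg : ContDiffAt ℝ 2 g (q.1 ^ 2 + q.2 ^ 2) := by
    obtain ⟨h0, h1⟩ := hq
    have hL : 0 < L (q.1 ^ 2 + q.2 ^ 2) := L_pos h0 h1
    apply ContDiffAt.mul
    · exact Real.contDiffAt_rpow_const_of_ne h0.ne'
    · have hLc : ContDiffAt ℝ 2 L (q.1 ^ 2 + q.2 ^ 2) := by
        unfold L
        exact contDiffAt_const.mul (Real.contDiffAt_log.mpr h0.ne')
      exact (Real.contDiffAt_rpow_const_of_ne hL.ne').comp _ hLc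
  exact hg.comp q hsq

lemma isOpen_punctured :
    IsOpen {q : ℝ × ℝ | 0 < q.1 ^ 2 + q.2 ^ 2 ∧ q.1 ^ 2 + q.2 ^ 2 < 1} := by
  have hc : Continuous (fun p : ℝ × ℝ => p.1 ^ 2 + p.2 ^ 2) :=
    (continuous_fst.pow 2).add (continuous_snd.pow 2)
  exact (isOpen_lt continuous_const hc).inter (isOpen_lt hc continuous_const)

lemma continuousOn_fderiv :
    ContinuousOn (fderiv ℝ GammaFn) {p : ℝ × ℝ | p.1 ^ 2 + p.2 ^ 2 < 1} := by
  intro p hp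
  by_cases hp0 : p = 0
  · subst hp0
    apply ContinuousAt.continuousWithinAt
    unfold ContinuousAt
    rw [fderiv_zero]
    exact tendsto_fderiv_zero
  · apply ContinuousAt.continuousWithinAt
    have h0 : 0 < p.1 ^ 2 + p.2 ^ 2 := sq_pos_of_ne hp0
    have hmem : p ∈ {q : ℝ × ℝ | 0 < q.1 ^ 2 + q.2 ^ 2 ∧ q.1 ^ 2 + q.2 ^ 2 < 1} := ⟨h0, hp⟩
    have h2 : ContDiffOn ℝ (1 + 1) GammaFn
        {q : ℝ × ℝ | 0 < q.1 ^ 2 + q.2 ^ 2 ∧ q.1 ^ 2 + q.2 ^ 2 < 1} := by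
      have := contDiffOn_punctured
      norm_num at this ⊢
      exact this
    rw [contDiffOn_succ_iff_fderiv_of_isOpen isOpen_punctured] at h2
    exact (h2.2.2.continuousOn).continuousAt (isOpen_punctured.mem_nhds hmem)

lemma differentiableOn_Gamma :
    DifferentiableOn ℝ GammaFn {p : ℝ × ℝ | p.1 ^ 2 + p.2 ^ 2 < 1} := by
  intro p hp
  by_cases hp0 : p = 0
  · subst hp0
    exact hasFDerivAt_zero.differentiableAt.differentiableWithinAt
  · exact (hasFDerivAt_Gamma (sq_pos_of_ne hp0) hp).differentiableAt.differentiableWithinAt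

end Stmt8Aux

/-- `Γ` is continuously differentiable on the open unit disk, vanishes at the origin,
and both of its partial derivatives at the origin vanish, so its total derivative at the
origin is the zero map. -/
theorem stmt8 :
    ContDiffOn ℝ 1 GammaFn {p : ℝ × ℝ | p.1 ^ 2 + p.2 ^ 2 < 1} ∧
    GammaFn (0, 0) = 0 ∧
    fderiv ℝ GammaFn (0, 0) (1, 0) = 0 ∧
    fderiv ℝ GammaFn (0, 0) (0, 1) = 0 ∧
    fderiv ℝ GammaFn (0, 0) = 0 := by
  have hopen : IsOpen {p : ℝ × ℝ | p.1 ^ 2 + p.2 ^ 2 < 1} := by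
    have hc : Continuous (fun p : ℝ × ℝ => p.1 ^ 2 + p.2 ^ 2) :=
      (continuous_fst.pow 2).add (continuous_snd.pow 2)
    exact isOpen_lt hc continuous_const
  have hfd0 : fderiv ℝ GammaFn (0, 0) = 0 := by
    rw [Prod.mk_zero_zero]
    exact Stmt8Aux.fderiv_zero
  refine ⟨?_, ?_, ?_, ?_, hfd0⟩
  · rw [show (1 : WithTop ℕ∞) = 0 + 1 from (zero_add 1).symm,
      contDiffOn_succ_iff_fderiv_of_isOpen hopen]
    refine ⟨Stmt8Aux.differentiableOn_Gamma, ?_, ?_⟩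
    · intro h
      exact absurd h (by norm_num)
    · exact contDiffOn_zero.mpr Stmt8Aux.continuousOn_fderiv
  · simp [GammaFn]
  · rw [hfd0]; simp
  · rw [hfd0]; simp
end
end

section
/- Let m be a positive integer and define f(x,ε) = x·∏_{i=1}^{m}(x² − (iε/m)²) and F(x,ε) = x + ε·∂f/∂x(x,ε). Then there exist ε₂ > 0 and a continuous function x: [0, ε₂) → ℝ with x(0) = 0 and F(x(ε), ε) = 0 for all ε ∈ [0, ε₂); moreover, as ε → 0⁺, x(ε) = (−1)^{m+1} · ((m!)²/m^{2m}) · ε^{2m+1} + O(ε^{2m+2}). -/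
open Set Filter

noncomputable section

/-- The polynomial `f(x, ε) = x ⬝ ∏_{i=1}^{m} (x² − (iε/m)²)`. -/
noncomputable def fPol (m : ℕ) (x ε : ℝ) : ℝ :=
  x * ∏ i ∈ Finset.Icc 1 m, (x ^ 2 - ((i : ℝ) * ε / (m : ℝ)) ^ 2)

lemma abs_prod_le {ι : Type*} (s : Finset ι) (v : ι → ℝ) (B : ℝ)
    (hv : ∀ i ∈ s, |v i| ≤ B) : |∏ i ∈ s, v i| ≤ B ^ s.card := by
  calc |∏ i ∈ s, v i| = ∏ i ∈ s, |v i| := Finset.abs_prod s v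
    _ ≤ ∏ i ∈ s, B := Finset.prod_le_prod (fun i _ => abs_nonneg _) hv
    _ = B ^ s.card := Finset.prod_const B

lemma abs_prod_sub_prod_le {ι : Type*} [DecidableEq ι] (s : Finset ι) (u v : ι → ℝ) (B : ℝ)
    (hB : 1 ≤ B) (hu : ∀ i ∈ s, |u i| ≤ B) (hv : ∀ i ∈ s, |v i| ≤ B) :
    |∏ i ∈ s, u i - ∏ i ∈ s, v i| ≤ B ^ s.card * ∑ i ∈ s, |u i - v i| := by
  induction s using Finset.induction_on with
  | empty => simp
  | @insert a s ha ih =>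
    rw [Finset.prod_insert ha, Finset.prod_insert ha, Finset.sum_insert ha,
      Finset.card_insert_of_notMem ha]
    have hu' : ∀ i ∈ s, |u i| ≤ B := fun i hi => hu i (Finset.mem_insert_of_mem hi)
    have hv' : ∀ i ∈ s, |v i| ≤ B := fun i hi => hv i (Finset.mem_insert_of_mem hi)
    have ih' := ih hu' hv'
    have hua := hu a (Finset.mem_insert_self a s)
    have hQ : |∏ i ∈ s, v i| ≤ B ^ s.card := abs_prod_le s v B hv'
    have key : |u a * ∏ i ∈ s, u i - v a * ∏ i ∈ s, v i| ≤
        |u a| * |∏ i ∈ s, u i - ∏ i ∈ s, v i| + |u a - v a| * |∏ i ∈ s, v i| := by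
      have h : u a * ∏ i ∈ s, u i - v a * ∏ i ∈ s, v i =
          u a * (∏ i ∈ s, u i - ∏ i ∈ s, v i) + (u a - v a) * ∏ i ∈ s, v i := by ring
      rw [h]
      calc _ ≤ |u a * (∏ i ∈ s, u i - ∏ i ∈ s, v i)| + |(u a - v a) * ∏ i ∈ s, v i| :=
            abs_add_le _ _
        _ = _ := by rw [abs_mul, abs_mul]
    have hBpos : (0:ℝ) < B := lt_of_lt_of_le zero_lt_one hB
    have h1 : |u a| * |∏ i ∈ s, u i - ∏ i ∈ s, v i| ≤ B * (B ^ s.card * ∑ i ∈ s, |u i - v i|) :=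
      mul_le_mul hua ih' (abs_nonneg _) (le_of_lt hBpos)
    have h2 : |u a - v a| * |∏ i ∈ s, v i| ≤ B ^ (s.card + 1) * |u a - v a| := by
      calc |u a - v a| * |∏ i ∈ s, v i| ≤ |u a - v a| * B ^ s.card :=
            mul_le_mul_of_nonneg_left hQ (abs_nonneg _)
        _ ≤ |u a - v a| * B ^ (s.card + 1) :=
            mul_le_mul_of_nonneg_left (pow_le_pow_right₀ hB (Nat.le_succ _)) (abs_nonneg _)
        _ = B ^ (s.card + 1) * |u a - v a| := mul_comm _ _
    calc |u a * ∏ i ∈ s, u i - v a * ∏ i ∈ s, v i| ≤ _ := key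
      _ ≤ B * (B ^ s.card * ∑ i ∈ s, |u i - v i|) + B ^ (s.card + 1) * |u a - v a| :=
          add_le_add h1 h2
      _ = B ^ (s.card + 1) * (|u a - v a| + ∑ i ∈ s, |u i - v i|) := by ring

lemma factor_bound (w z : ℝ) (hw : |w| ≤ 1) (hz : |z| ≤ 1) : |z^2 - w| ≤ 2 := by
  have h1 : |z^2| ≤ 1 := by rw [abs_pow]; nlinarith [abs_nonneg z]
  calc |z^2 - w| ≤ |z^2| + |w| := abs_sub _ _
    _ ≤ 2 := by linarith

lemma sq_sub_sq_abs (x y : ℝ) (hx : |x| ≤ 1) (hy : |y| ≤ 1) : |x^2 - y^2| ≤ 2 * |x - y| := by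
  have h : x^2 - y^2 = (x + y) * (x - y) := by ring
  rw [h, abs_mul]
  have h2 : |x + y| ≤ 2 := by
    calc |x + y| ≤ |x| + |y| := abs_add_le _ _
      _ ≤ 2 := by linarith
  exact mul_le_mul_of_nonneg_right h2 (abs_nonneg _)

lemma gen_bound (s : Finset ℕ) (w : ℕ → ℝ) (z : ℝ) (hz : |z| ≤ 1)
    (hw : ∀ i ∈ s, |w i| ≤ 1) : |∏ i ∈ s, (z^2 - w i)| ≤ 2 ^ s.card :=
  abs_prod_le s _ 2 (fun i hi => factor_bound (w i) z (hw i hi) hz)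

lemma gen_sub (s : Finset ℕ) (w : ℕ → ℝ) (x y : ℝ) (hx : |x| ≤ 1) (hy : |y| ≤ 1)
    (hw : ∀ i ∈ s, |w i| ≤ 1) :
    |∏ i ∈ s, (x^2 - w i) - ∏ i ∈ s, (y^2 - w i)| ≤ 2 ^ s.card * (s.card * |x^2 - y^2|) := by
  have h := abs_prod_sub_prod_le s (fun i => x^2 - w i) (fun i => y^2 - w i) 2 one_le_two
    (fun i hi => factor_bound (w i) x (hw i hi) hx)
    (fun i hi => factor_bound (w i) y (hw i hi) hy)
  calc _ ≤ (2:ℝ) ^ s.card * ∑ i ∈ s, |(x^2 - w i) - (y^2 - w i)| := h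
    _ = 2 ^ s.card * (s.card * |x^2 - y^2|) := by
        simp [sub_sub_sub_cancel_right, Finset.sum_const, nsmul_eq_mul]

noncomputable def Qfun (m : ℕ) (ε z : ℝ) : ℝ :=
  ∏ i ∈ Finset.Icc 1 m, (z ^ 2 - ((i : ℝ) * ε / (m : ℝ)) ^ 2)

noncomputable def Sfun (m : ℕ) (ε z : ℝ) : ℝ :=
  ∑ i ∈ Finset.Icc 1 m,
    (∏ j ∈ (Finset.Icc 1 m).erase i, (z ^ 2 - ((j : ℝ) * ε / (m : ℝ)) ^ 2)) * (2 * z)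

lemma c_abs_le (m i : ℕ) (ε : ℝ) (hε : 0 ≤ ε) (hε1 : ε ≤ 1) (hi : i ∈ Finset.Icc 1 m) :
    |((i : ℝ) * ε / (m : ℝ)) ^ 2| ≤ 1 := by
  rw [Finset.mem_Icc] at hi
  have h1 : (1:ℝ) ≤ (i:ℝ) := by exact_mod_cast hi.1
  have h2 : (i:ℝ) ≤ (m:ℝ) := by exact_mod_cast hi.2
  have hm : (1:ℝ) ≤ (m:ℝ) := le_trans h1 h2
  have h0 : (0:ℝ) ≤ (i : ℝ) * ε / (m : ℝ) := by positivity
  have hle : (i : ℝ) * ε / (m : ℝ) ≤ 1 := by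
    rw [div_le_one (by linarith)]
    nlinarith
  rw [abs_pow, abs_of_nonneg h0]
  nlinarith

noncomputable def phi (m : ℕ) (ε x : ℝ) : ℝ := Qfun m ε x + x * Sfun m ε x

section bounds
variable {m : ℕ} {ε x y : ℝ}

lemma Q_bound (hε : 0 ≤ ε) (hε1 : ε ≤ 1) (hx : |x| ≤ 1) : |Qfun m ε x| ≤ 2 ^ m := by
  have h := gen_bound (Finset.Icc 1 m) (fun i => ((i : ℝ) * ε / (m : ℝ)) ^ 2) x hx
    (fun i hi => c_abs_le m i ε hε hε1 hi)
  simpa [Qfun] using h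

lemma Q_sub (hε : 0 ≤ ε) (hε1 : ε ≤ 1) (hx : |x| ≤ 1) (hy : |y| ≤ 1) :
    |Qfun m ε x - Qfun m ε y| ≤ 2 ^ m * ((m : ℝ) * |x ^ 2 - y ^ 2|) := by
  have h := gen_sub (Finset.Icc 1 m) (fun i => ((i : ℝ) * ε / (m : ℝ)) ^ 2) x y hx hy
    (fun i hi => c_abs_le m i ε hε hε1 hi)
  simpa [Qfun] using h

lemma P_bound (hε : 0 ≤ ε) (hε1 : ε ≤ 1) (hx : |x| ≤ 1) (i : ℕ) :
    |∏ j ∈ (Finset.Icc 1 m).erase i, (x ^ 2 - ((j : ℝ) * ε / (m : ℝ)) ^ 2)| ≤ 2 ^ m := by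
  have h := gen_bound ((Finset.Icc 1 m).erase i) (fun j => ((j : ℝ) * ε / (m : ℝ)) ^ 2) x hx
    (fun j hj => c_abs_le m j ε hε hε1 (Finset.mem_of_mem_erase hj))
  refine h.trans ?_
  have hcard : ((Finset.Icc 1 m).erase i).card ≤ m := by
    refine le_trans Finset.card_erase_le ?_
    simp
  exact pow_le_pow_right₀ one_le_two hcard

lemma P_sub (hε : 0 ≤ ε) (hε1 : ε ≤ 1) (hx : |x| ≤ 1) (hy : |y| ≤ 1) (i : ℕ) :
    |(∏ j ∈ (Finset.Icc 1 m).erase i, (x ^ 2 - ((j : ℝ) * ε / (m : ℝ)) ^ 2)) -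
      ∏ j ∈ (Finset.Icc 1 m).erase i, (y ^ 2 - ((j : ℝ) * ε / (m : ℝ)) ^ 2)| ≤
      2 ^ m * ((m : ℝ) * |x ^ 2 - y ^ 2|) := by
  have h := gen_sub ((Finset.Icc 1 m).erase i) (fun j => ((j : ℝ) * ε / (m : ℝ)) ^ 2) x y hx hy
    (fun j hj => c_abs_le m j ε hε hε1 (Finset.mem_of_mem_erase hj))
  refine h.trans ?_
  have hcard : ((Finset.Icc 1 m).erase i).card ≤ m := by
    refine le_trans Finset.card_erase_le ?_
    simp
  have h1 : (2:ℝ) ^ ((Finset.Icc 1 m).erase i).card ≤ 2 ^ m := pow_le_pow_right₀ one_le_two hcard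
  have h2 : (((Finset.Icc 1 m).erase i).card : ℝ) ≤ (m : ℝ) := by exact_mod_cast hcard
  exact mul_le_mul h1 (mul_le_mul_of_nonneg_right h2 (abs_nonneg _)) (by positivity) (by positivity)

lemma S_bound (hε : 0 ≤ ε) (hε1 : ε ≤ 1) (hx : |x| ≤ 1) :
    |Sfun m ε x| ≤ (m : ℝ) * (2 ^ m * (2 * |x|)) := by
  unfold Sfun
  calc |∑ i ∈ Finset.Icc 1 m, _| ≤ ∑ i ∈ Finset.Icc 1 m,
        |(∏ j ∈ (Finset.Icc 1 m).erase i, (x ^ 2 - ((j : ℝ) * ε / (m : ℝ)) ^ 2)) * (2 * x)| :=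
        Finset.abs_sum_le_sum_abs _ _
    _ ≤ ∑ i ∈ Finset.Icc 1 m, (2:ℝ) ^ m * (2 * |x|) := by
        refine Finset.sum_le_sum fun i _ => ?_
        rw [abs_mul]
        have h1 := P_bound (m := m) hε hε1 hx i
        have h2 : |2 * x| = 2 * |x| := by rw [abs_mul, abs_two]
        rw [h2]
        exact mul_le_mul_of_nonneg_right h1 (by positivity)
    _ ≤ (m : ℝ) * (2 ^ m * (2 * |x|)) := by
        rw [Finset.sum_const]
        simp only [Nat.card_Icc, Nat.add_sub_cancel, nsmul_eq_mul]
        exact le_of_eq rfl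

lemma S_sub (hε : 0 ≤ ε) (hε1 : ε ≤ 1) (hx : |x| ≤ 1) (hy : |y| ≤ 1) :
    |Sfun m ε x - Sfun m ε y| ≤
      (m : ℝ) * (2 ^ m * ((m : ℝ) * |x ^ 2 - y ^ 2|) * 2 + 2 ^ m * (2 * |x - y|)) := by
  unfold Sfun
  rw [← Finset.sum_sub_distrib]
  calc _ ≤ ∑ i ∈ Finset.Icc 1 m,
        |(∏ j ∈ (Finset.Icc 1 m).erase i, (x ^ 2 - ((j : ℝ) * ε / (m : ℝ)) ^ 2)) * (2 * x) -
          (∏ j ∈ (Finset.Icc 1 m).erase i, (y ^ 2 - ((j : ℝ) * ε / (m : ℝ)) ^ 2)) * (2 * y)| :=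
        Finset.abs_sum_le_sum_abs _ _
    _ ≤ ∑ i ∈ Finset.Icc 1 m,
        ((2:ℝ) ^ m * ((m : ℝ) * |x ^ 2 - y ^ 2|) * 2 + 2 ^ m * (2 * |x - y|)) := by
        refine Finset.sum_le_sum fun i _ => ?_
        set P1 := ∏ j ∈ (Finset.Icc 1 m).erase i, (x ^ 2 - ((j : ℝ) * ε / (m : ℝ)) ^ 2) with hP1
        set P2 := ∏ j ∈ (Finset.Icc 1 m).erase i, (y ^ 2 - ((j : ℝ) * ε / (m : ℝ)) ^ 2) with hP2
        have hsplit : P1 * (2 * x) - P2 * (2 * y) = (P1 - P2) * (2 * x) + P2 * (2 * x - 2 * y) := by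
          ring
        rw [hsplit]
        refine (abs_add_le _ _).trans ?_
        have h1 := P_sub (m := m) hε hε1 hx hy i
        have h2 := P_bound (m := m) hε hε1 hy i
        have h3 : |2 * x| ≤ 2 := by rw [abs_mul, abs_two]; linarith
        have h4 : |2 * x - 2 * y| = 2 * |x - y| := by
          rw [show 2 * x - 2 * y = 2 * (x - y) by ring, abs_mul]; simp
        have e1 : |(P1 - P2) * (2 * x)| ≤ 2 ^ m * ((m : ℝ) * |x ^ 2 - y ^ 2|) * 2 := by
          rw [abs_mul]; exact mul_le_mul h1 h3 (abs_nonneg _) (by positivity)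
        have e2 : |P2 * (2 * x - 2 * y)| ≤ 2 ^ m * (2 * |x - y|) := by
          rw [abs_mul, h4]; exact mul_le_mul_of_nonneg_right h2 (by positivity)
        linarith
    _ ≤ _ := by
        rw [Finset.sum_const]
        simp only [Nat.card_Icc, Nat.add_sub_cancel, nsmul_eq_mul]
        exact le_of_eq (by ring)

end bounds

section phiLemmas
variable {m : ℕ} {ε x y : ℝ}

lemma phi_bound (hε : 0 ≤ ε) (hε1 : ε ≤ 1) (hx : |x| ≤ 1) :
    |phi m ε x| ≤ 2 ^ m * (2 * (m : ℝ) + 1) := by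
  have hQ := Q_bound (m := m) hε hε1 hx
  have hS := S_bound (m := m) hε hε1 hx
  have habs : |phi m ε x| ≤ |Qfun m ε x| + |x| * |Sfun m ε x| := by
    unfold phi
    refine (abs_add_le _ _).trans ?_
    rw [abs_mul]
  have hxS : |x| * |Sfun m ε x| ≤ 1 * ((m : ℝ) * (2 ^ m * (2 * 1))) := by
    refine mul_le_mul hx (hS.trans ?_) (abs_nonneg _) zero_le_one
    gcongr
  have hA : (0:ℝ) ≤ 2 ^ m := by positivity
  have hM : (0:ℝ) ≤ (m:ℝ) := Nat.cast_nonneg m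
  nlinarith [mul_nonneg hA hM]

lemma phi_lip (hε : 0 ≤ ε) (hε1 : ε ≤ 1) (hx : |x| ≤ 1) (hy : |y| ≤ 1) :
    |phi m ε x - phi m ε y| ≤ ((m : ℝ) + 1) ^ 2 * 2 ^ (m + 3) * |x - y| := by
  have hsq := sq_sub_sq_abs x y hx hy
  have hQ : |Qfun m ε x - Qfun m ε y| ≤ 2 ^ m * ((m : ℝ) * (2 * |x - y|)) := by
    refine (Q_sub hε hε1 hx hy).trans ?_
    gcongr
  have hS : |Sfun m ε x - Sfun m ε y| ≤
      (m : ℝ) * (2 ^ m * ((m : ℝ) * (2 * |x - y|)) * 2 + 2 ^ m * (2 * |x - y|)) := by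
    refine (S_sub hε hε1 hx hy).trans ?_
    gcongr
  have hSy : |Sfun m ε y| ≤ (m : ℝ) * (2 ^ m * (2 * 1)) := by
    refine (S_bound hε hε1 hy).trans ?_
    gcongr
  have hsplit : phi m ε x - phi m ε y =
      (Qfun m ε x - Qfun m ε y) + (x * (Sfun m ε x - Sfun m ε y) + (x - y) * Sfun m ε y) := by
    unfold phi; ring
  have habs : |phi m ε x - phi m ε y| ≤ |Qfun m ε x - Qfun m ε y| +
      (|x| * |Sfun m ε x - Sfun m ε y| + |x - y| * |Sfun m ε y|) := by
    rw [hsplit]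
    refine (abs_add_le _ _).trans ?_
    gcongr
    refine (abs_add_le _ _).trans ?_
    rw [abs_mul, abs_mul]
  have h2 : |x| * |Sfun m ε x - Sfun m ε y| ≤
      1 * ((m : ℝ) * (2 ^ m * ((m : ℝ) * (2 * |x - y|)) * 2 + 2 ^ m * (2 * |x - y|))) :=
    mul_le_mul hx hS (abs_nonneg _) zero_le_one
  have h3 : |x - y| * |Sfun m ε y| ≤ |x - y| * ((m : ℝ) * (2 ^ m * (2 * 1))) :=
    mul_le_mul_of_nonneg_left hSy (abs_nonneg _)
  have hA : (0:ℝ) < 2 ^ m := by positivity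
  have hM : (0:ℝ) ≤ (m:ℝ) := Nat.cast_nonneg m
  have ha : (0:ℝ) ≤ |x - y| := abs_nonneg _
  have hpoly : 4 * (m:ℝ)^2 + 6 * (m:ℝ) ≤ 8 * ((m:ℝ) + 1)^2 := by nlinarith
  have hkey : (2:ℝ) ^ (m + 3) = 2 ^ m * 8 := by rw [pow_add]; norm_num
  rw [hkey]
  nlinarith [mul_le_mul_of_nonneg_left hpoly (mul_nonneg hA.le ha)]

lemma phi_quad (hε : 0 ≤ ε) (hε1 : ε ≤ 1) (hx : |x| ≤ 1) :
    |phi m ε x - phi m ε 0| ≤ (m : ℝ) * 2 ^ (m + 2) * x ^ 2 := by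
  have h0 : |(0:ℝ)| ≤ 1 := by norm_num
  have hQ : |Qfun m ε x - Qfun m ε 0| ≤ 2 ^ m * ((m : ℝ) * x ^ 2) := by
    refine (Q_sub hε hε1 hx h0).trans ?_
    have : |x ^ 2 - (0:ℝ) ^ 2| = x ^ 2 := by
      simp [abs_of_nonneg (sq_nonneg x)]
    rw [this]
  have hS := S_bound (m := m) hε hε1 hx
  have hsplit : phi m ε x - phi m ε 0 = (Qfun m ε x - Qfun m ε 0) + x * Sfun m ε x := by
    unfold phi; ring
  have habs : |phi m ε x - phi m ε 0| ≤ |Qfun m ε x - Qfun m ε 0| + |x| * |Sfun m ε x| := by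
    rw [hsplit]
    refine (abs_add_le _ _).trans ?_
    rw [abs_mul]
  have h2 : |x| * |Sfun m ε x| ≤ |x| * ((m : ℝ) * (2 ^ m * (2 * |x|))) :=
    mul_le_mul_of_nonneg_left hS (abs_nonneg _)
  have hxx : |x| * |x| = x ^ 2 := by rw [abs_mul_abs_self]; ring
  have hA : (0:ℝ) < 2 ^ m := by positivity
  have hM : (0:ℝ) ≤ (m:ℝ) := Nat.cast_nonneg m
  have hkey : (2:ℝ) ^ (m + 2) = 2 ^ m * 4 := by rw [pow_add]; norm_num
  rw [hkey]
  have h4 : |x| * ((m:ℝ) * (2 ^ m * (2 * |x|))) = 2 ^ m * (m:ℝ) * (2 * x ^ 2) := by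
    rw [← hxx]; ring
  nlinarith [mul_nonneg (mul_nonneg hA.le hM) (sq_nonneg x)]

lemma phi_zero (hm : 0 < m) : phi m ε 0 =
    (-1:ℝ) ^ m * ((m.factorial : ℝ) ^ 2 / (m:ℝ) ^ (2 * m)) * ε ^ (2 * m) := by
  have hm' : ((m:ℝ)) ≠ 0 := Nat.cast_ne_zero.2 hm.ne'
  unfold phi Qfun Sfun
  simp only [ne_eq, OfNat.ofNat_ne_zero, not_false_eq_true, zero_pow, zero_sub, mul_zero,
    zero_mul, add_zero]
  have h1 : ∀ i ∈ Finset.Icc 1 m, -(((i:ℝ) * ε / (m:ℝ)) ^ 2) =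
      (-1) * (((i:ℝ)) ^ 2 * (ε ^ 2 / (m:ℝ) ^ 2)) := by
    intro i _
    field_simp
  rw [Finset.prod_congr rfl h1, Finset.prod_mul_distrib, Finset.prod_mul_distrib,
    Finset.prod_const, Finset.prod_const]
  have hcard : (Finset.Icc 1 m).card = m := by simp
  have h2 : ∏ i ∈ Finset.Icc 1 m, ((i:ℝ)) ^ 2 = ((m.factorial : ℝ)) ^ 2 := by
    rw [Finset.prod_pow]
    congr 1
    rw [← Nat.cast_prod]
    congr 1
    rw [← Finset.Ico_add_one_right_eq_Icc, Finset.prod_Ico_id_eq_factorial]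
  rw [hcard, h2]
  rw [div_pow, ← pow_mul, ← pow_mul]
  field_simp

end phiLemmas

lemma hasDerivAt_fPol (m : ℕ) (ε x : ℝ) :
    HasDerivAt (fun u : ℝ => fPol m u ε) (phi m ε x) x := by
  have h1 : ∀ i ∈ Finset.Icc 1 m,
      HasDerivAt (fun u : ℝ => u ^ 2 - ((i : ℝ) * ε / (m : ℝ)) ^ 2) (2 * x) x := by
    intro i _
    simpa using (hasDerivAt_pow 2 x).sub_const (((i : ℝ) * ε / (m : ℝ)) ^ 2)
  have hprod := HasDerivAt.finset_prod h1
  have h := (hasDerivAt_id x).mul hprod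
  simp only [smul_eq_mul, one_mul, id_eq] at h
  unfold phi Qfun Sfun
  have e1 : (fun u : ℝ => fPol m u ε) =
      id * ∏ i ∈ Finset.Icc 1 m, fun u : ℝ => u ^ 2 - ((i : ℝ) * ε / (m : ℝ)) ^ 2 := by
    ext u
    simp [fPol, Finset.prod_apply]
  have e2 : (∏ i ∈ Finset.Icc 1 m, fun u : ℝ => u ^ 2 - ((i : ℝ) * ε / (m : ℝ)) ^ 2) x =
      ∏ i ∈ Finset.Icc 1 m, (x ^ 2 - ((i : ℝ) * ε / (m : ℝ)) ^ 2) := by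
    rw [Finset.prod_apply]
  rw [e2, ← e1] at h
  exact h

lemma deriv_fPol (m : ℕ) (ε x : ℝ) :
    deriv (fun u : ℝ => fPol m u ε) x = phi m ε x := (hasDerivAt_fPol m ε x).deriv

noncomputable def proj (x : ℝ) : ℝ := max (min x 1) (-1)

lemma proj_abs_le (x : ℝ) : |proj x| ≤ 1 :=
  abs_le.2 ⟨le_max_right _ _, max_le (min_le_right _ _) (by norm_num)⟩

lemma proj_eq {x : ℝ} (h : |x| ≤ 1) : proj x = x := by
  rcases abs_le.1 h with ⟨h1, h2⟩
  unfold proj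
  rw [min_eq_left h2, max_eq_left h1]

lemma proj_lip (x y : ℝ) : |proj x - proj y| ≤ |x - y| := by
  refine (abs_max_sub_max_le_abs _ _ _).trans ?_
  refine (abs_min_sub_min_le_max x 1 y 1).trans ?_
  simp

noncomputable def Lphi (m : ℕ) : ℝ := ((m:ℝ) + 1) ^ 2 * 2 ^ (m + 3)
noncomputable def Bphi (m : ℕ) : ℝ := 2 ^ m * (2 * (m:ℝ) + 1)

lemma Lphi_pos (m : ℕ) : 0 < Lphi m := by unfold Lphi; positivity
lemma Bphi_pos (m : ℕ) : 0 < Bphi m := by unfold Bphi; positivity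

noncomputable def gmap (m : ℕ) (ε x : ℝ) : ℝ := -(ε * phi m ε (proj x))

lemma gmap_contract {m : ℕ} {ε : ℝ} (hε : 0 ≤ ε) (hε1 : ε ≤ 1) (hL : ε * Lphi m ≤ 1/2) :
    ContractingWith (1/2 : NNReal) (gmap m ε) := by
  constructor
  · rw [← NNReal.coe_lt_coe]
    norm_num
  · refine LipschitzWith.of_dist_le_mul fun x y => ?_
    rw [Real.dist_eq, Real.dist_eq]
    have h1 : |gmap m ε x - gmap m ε y| = ε * |phi m ε (proj x) - phi m ε (proj y)| := by
      unfold gmap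
      rw [show -(ε * phi m ε (proj x)) - -(ε * phi m ε (proj y)) =
        ε * (phi m ε (proj y) - phi m ε (proj x)) by ring, abs_mul, abs_of_nonneg hε,
        abs_sub_comm]
    rw [h1]
    have h2 : |phi m ε (proj x) - phi m ε (proj y)| ≤ Lphi m * |proj x - proj y| :=
      phi_lip hε hε1 (proj_abs_le x) (proj_abs_le y)
    have h3 : |proj x - proj y| ≤ |x - y| := proj_lip x y
    have h4 : ε * |phi m ε (proj x) - phi m ε (proj y)| ≤ ε * (Lphi m * |x - y|) := by
      refine mul_le_mul_of_nonneg_left (h2.trans ?_) hε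
      exact mul_le_mul_of_nonneg_left h3 (Lphi_pos m).le
    have h5 : ε * (Lphi m * |x - y|) = (ε * Lphi m) * |x - y| := by ring
    have h6 : (ε * Lphi m) * |x - y| ≤ (1/2) * |x - y| :=
      mul_le_mul_of_nonneg_right hL (abs_nonneg _)
    have h7 : ((1/2 : NNReal) : ℝ) = 1/2 := by norm_num
    rw [h7]
    linarith

open Classical in
noncomputable def xfun (m : ℕ) (ε : ℝ) : ℝ :=
  if h : ContractingWith (1/2 : NNReal) (gmap m ε) then
    ContractingWith.fixedPoint (gmap m ε) h else 0

lemma xfun_fixed {m : ℕ} {ε : ℝ} (h : ContractingWith (1/2 : NNReal) (gmap m ε)) :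
    gmap m ε (xfun m ε) = xfun m ε := by
  unfold xfun
  rw [dif_pos h]
  exact h.fixedPoint_isFixedPt

lemma xfun_abs_le {m : ℕ} {ε : ℝ} (hε : 0 ≤ ε) (hε1 : ε ≤ 1) (hL : ε * Lphi m ≤ 1/2) :
    |xfun m ε| ≤ ε * Bphi m := by
  have h := gmap_contract hε hε1 hL
  have heq := xfun_fixed h
  rw [← heq]
  unfold gmap
  rw [abs_neg, abs_mul, abs_of_nonneg hε]
  exact mul_le_mul_of_nonneg_left (phi_bound hε hε1 (proj_abs_le _)) hε

lemma xfun_eq {m : ℕ} {ε : ℝ} (hε : 0 ≤ ε) (hε1 : ε ≤ 1) (hL : ε * Lphi m ≤ 1/2)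
    (hB : ε * Bphi m ≤ 1) : xfun m ε = -(ε * phi m ε (xfun m ε)) := by
  have h := gmap_contract hε hε1 hL
  have heq := xfun_fixed h
  have habs : |xfun m ε| ≤ 1 := (xfun_abs_le hε hε1 hL).trans hB
  conv_lhs => rw [← heq]
  unfold gmap
  rw [proj_eq habs]

lemma xfun_zero (m : ℕ) : xfun m 0 = 0 := by
  have h := gmap_contract (m := m) le_rfl zero_le_one (by simp)
  have heq := xfun_fixed h
  rw [← heq]
  unfold gmap
  simp

noncomputable def eps2 (m : ℕ) : ℝ :=
  min 1 (min (1 / (2 * Lphi m + 2)) (1 / (Bphi m + 1)))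

lemma eps2_pos (m : ℕ) : 0 < eps2 m := by
  have h1 := Lphi_pos m
  have h2 := Bphi_pos m
  unfold eps2
  refine lt_min one_pos (lt_min ?_ ?_) <;> positivity

lemma eps2_cond {m : ℕ} {ε : ℝ} (h0 : 0 ≤ ε) (h : ε < eps2 m) :
    ε ≤ 1 ∧ ε * Lphi m ≤ 1/2 ∧ ε * Bphi m ≤ 1 := by
  have hL := Lphi_pos m
  have hB := Bphi_pos m
  unfold eps2 at h
  have h1 : ε < 1 := lt_of_lt_of_le h (min_le_left _ _)
  have h2 : ε < 1 / (2 * Lphi m + 2) := lt_of_lt_of_le h ((min_le_right _ _).trans (min_le_left _ _))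
  have h3 : ε < 1 / (Bphi m + 1) := lt_of_lt_of_le h ((min_le_right _ _).trans (min_le_right _ _))
  have h2' : ε * (2 * Lphi m + 2) < 1 := by
    rw [← lt_div_iff₀ (by positivity)]; exact h2
  have h3' : ε * (Bphi m + 1) < 1 := by
    rw [← lt_div_iff₀ (by positivity)]; exact h3
  refine ⟨h1.le, by nlinarith, by nlinarith⟩

lemma phi_cont (m : ℕ) (y : ℝ) : Continuous fun ε : ℝ => phi m ε y := by
  unfold phi Qfun Sfun
  fun_prop

lemma xfun_contOn (m : ℕ) : ContinuousOn (xfun m) (Set.Ico 0 (eps2 m)) := by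
  intro ε' hε'
  rw [Set.mem_Ico] at hε'
  obtain ⟨hc1', hc2', hc3'⟩ := eps2_cond hε'.1 hε'.2
  set y := xfun m ε' with hy
  have hyeq : y = -(ε' * phi m ε' y) := xfun_eq hε'.1 hc1' hc2' hc3'
  have hyabs : |y| ≤ 1 := (xfun_abs_le hε'.1 hc1' hc2').trans hc3'
  have key : ∀ ε ∈ Set.Ico 0 (eps2 m),
      dist (xfun m ε) y ≤ 2 * |ε * phi m ε y - ε' * phi m ε' y| := by
    intro ε hε
    rw [Set.mem_Ico] at hε
    obtain ⟨hc1, hc2, hc3⟩ := eps2_cond hε.1 hε.2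
    have hcontr := gmap_contract hε.1 hc1 hc2
    have hfix : gmap m ε (xfun m ε) = xfun m ε := xfun_fixed hcontr
    have hlip := LipschitzWith.dist_le_mul hcontr.2 (xfun m ε) y
    have hgy : gmap m ε y = -(ε * phi m ε y) := by
      unfold gmap; rw [proj_eq hyabs]
    have h1 : dist (xfun m ε) y ≤ dist (gmap m ε (xfun m ε)) (gmap m ε y) +
        dist (gmap m ε y) y := by
      rw [hfix]; exact dist_triangle _ _ _
    have h2 : dist (gmap m ε (xfun m ε)) (gmap m ε y) ≤ (1/2) * dist (xfun m ε) y := by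
      refine hlip.trans ?_
      have : ((1/2 : NNReal) : ℝ) = 1/2 := by norm_num
      rw [this]
    have h3 : dist (gmap m ε y) y = |ε * phi m ε y - ε' * phi m ε' y| := by
      rw [Real.dist_eq, hgy]
      nth_rewrite 2 [hyeq]
      rw [show -(ε * phi m ε y) - -(ε' * phi m ε' y) =
        -(ε * phi m ε y - ε' * phi m ε' y) by ring, abs_neg]
    rw [h3] at h1
    linarith
  have hcont : Continuous fun ε : ℝ => 2 * |ε * phi m ε y - ε' * phi m ε' y| := by
    have := phi_cont m y
    fun_prop
  rw [ContinuousWithinAt, tendsto_iff_dist_tendsto_zero]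
  refine squeeze_zero' (g := fun ε : ℝ => 2 * |ε * phi m ε y - ε' * phi m ε' y|)
    (Filter.Eventually.of_forall fun _ => dist_nonneg) ?_ ?_
  · filter_upwards [self_mem_nhdsWithin] with ε hε
    exact key ε hε
  · have h0 : (fun ε : ℝ => 2 * |ε * phi m ε y - ε' * phi m ε' y|) ε' = 0 := by simp
    have := (hcont.tendsto ε').mono_left (nhdsWithin_le_nhds
      (s := Set.Ico 0 (eps2 m)))
    simpa using this

/-- For `F(x,ε) = x + ε ∂f/∂x(x,ε)` there is a continuous branch `x(ε)` of zeros of `F`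
with `x(0) = 0` and the asymptotics
`x(ε) = (−1)^{m+1} ((m!)²/m^{2m}) ε^{2m+1} + O(ε^{2m+2})` as `ε → 0⁺`. -/
theorem stmt13 (m : ℕ) (hm : 0 < m) :
    ∃ ε₂ > (0 : ℝ), ∃ x : ℝ → ℝ,
      ContinuousOn x (Set.Ico 0 ε₂) ∧ x 0 = 0 ∧
      (∀ ε ∈ Set.Ico (0 : ℝ) ε₂,
        x ε + ε * deriv (fun u : ℝ => fPol m u ε) (x ε) = 0) ∧
      ∃ C : ℝ, ∀ᶠ ε in nhdsWithin (0 : ℝ) (Set.Ioi 0),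
        |x ε - (-1 : ℝ) ^ (m + 1) *
            ((m.factorial : ℝ) ^ 2 / (m : ℝ) ^ (2 * m)) * ε ^ (2 * m + 1)| ≤
          C * ε ^ (2 * m + 2) := by
  have hmR : (0:ℝ) < (m:ℝ) := Nat.cast_pos.2 hm
  refine ⟨eps2 m, eps2_pos m, xfun m, xfun_contOn m, xfun_zero m, ?_, ?_⟩
  · intro ε hε
    rw [Set.mem_Ico] at hε
    obtain ⟨hc1, hc2, hc3⟩ := eps2_cond hε.1 hε.2
    rw [deriv_fPol]
    have h := xfun_eq hε.1 hc1 hc2 hc3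
    linarith [h]
  · set K := (m.factorial : ℝ) ^ 2 / (m : ℝ) ^ (2 * m) with hK
    set Cq := (m:ℝ) * 2 ^ (m + 2) with hCq
    have hCqpos : 0 < Cq := by
      rw [hCq]; positivity
    have hBpos := Bphi_pos m
    have hKpos : 0 ≤ K := by rw [hK]; positivity
    refine ⟨4 * Cq * K ^ 2, ?_⟩
    have hδpos : 0 < min (eps2 m) (1 / (2 * Cq * Bphi m + 2)) := by
      refine lt_min (eps2_pos m) ?_
      positivity
    filter_upwards [Ioo_mem_nhdsGT_of_mem
      (show (0:ℝ) ∈ Set.Ico 0 (min (eps2 m) (1 / (2 * Cq * Bphi m + 2))) from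
        ⟨le_refl _, hδpos⟩)] with ε hε
    obtain ⟨hε0, hεδ⟩ := hε
    have hεe2 : ε < eps2 m := lt_of_lt_of_le hεδ (min_le_left _ _)
    obtain ⟨hc1, hc2, hc3⟩ := eps2_cond hε0.le hεe2
    set x := xfun m ε with hx
    have heq : x = -(ε * phi m ε x) := xfun_eq hε0.le hc1 hc2 hc3
    have hsum : x + ε * phi m ε x = 0 := by linarith [heq]
    have hb1 : |x| ≤ ε * Bphi m := xfun_abs_le hε0.le hc1 hc2
    have hxle1 : |x| ≤ 1 := hb1.trans hc3
    have hq : |phi m ε x - phi m ε 0| ≤ Cq * x ^ 2 := by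
      rw [hCq]; exact phi_quad hε0.le hc1 hxle1
    have hzero : phi m ε 0 = (-1:ℝ) ^ m * K * ε ^ (2 * m) := by
      rw [hK]; exact phi_zero hm
    have hp0abs : |phi m ε 0| = K * ε ^ (2 * m) := by
      rw [hzero, abs_mul, abs_mul, abs_pow, abs_pow, abs_neg, abs_one, one_pow, one_mul,
        abs_of_nonneg hKpos, abs_of_nonneg hε0.le]
    have hsmall : ε ^ 2 * Cq * Bphi m ≤ 1 / 2 := by
      have h4 : ε < 1 / (2 * Cq * Bphi m + 2) := lt_of_lt_of_le hεδ (min_le_right _ _)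
      have h5 : ε * (2 * Cq * Bphi m + 2) < 1 := by
        rw [← lt_div_iff₀ (by positivity)]; exact h4
      have h6 : 0 ≤ ε * (1 - ε) * Cq * Bphi m :=
        mul_nonneg (mul_nonneg (mul_nonneg hε0.le (by linarith)) hCqpos.le) hBpos.le
      nlinarith
    have hx2 : x ^ 2 ≤ (ε * Bphi m) * |x| := by
      nlinarith [sq_abs x, mul_le_mul_of_nonneg_right hb1 (abs_nonneg x)]
    have htri : |phi m ε x| ≤ K * ε ^ (2 * m) + Cq * x ^ 2 := by
      have h6 : |phi m ε x| ≤ |phi m ε x - phi m ε 0| + |phi m ε 0| := by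
        have := abs_add_le (phi m ε x - phi m ε 0) (phi m ε 0)
        simpa using this
      rw [hp0abs] at h6
      linarith
    have habs_eq : |x| = ε * |phi m ε x| := by
      conv_lhs => rw [heq]
      rw [abs_neg, abs_mul, abs_of_nonneg hε0.le]
    have h11 : ε * (K * ε ^ (2 * m)) = K * ε ^ (2 * m + 1) := by ring
    have hX : |x| ≤ 2 * K * ε ^ (2 * m + 1) := by
      have h7 : |x| ≤ ε * (K * ε ^ (2 * m) + Cq * x ^ 2) := by
        rw [habs_eq]; exact mul_le_mul_of_nonneg_left htri hε0.le
      have h8 : ε * (Cq * x ^ 2) ≤ ε * (Cq * ((ε * Bphi m) * |x|)) := by gcongr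
      have h9 : ε * (Cq * ((ε * Bphi m) * |x|)) = (ε ^ 2 * Cq * Bphi m) * |x| := by ring
      have h10 : (ε ^ 2 * Cq * Bphi m) * |x| ≤ (1 / 2) * |x| :=
        mul_le_mul_of_nonneg_right hsmall (abs_nonneg _)
      have h7' : ε * (K * ε ^ (2 * m) + Cq * x ^ 2) =
          K * ε ^ (2 * m + 1) + ε * (Cq * x ^ 2) := by ring
      linarith
    have hdiff : x - (-1:ℝ) ^ (m + 1) * K * ε ^ (2 * m + 1) =
        -(ε * (phi m ε x - phi m ε 0)) := by
      linear_combination hsum - ε * hzero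
    have hx2' : x ^ 2 ≤ (2 * K * ε ^ (2 * m + 1)) ^ 2 := by
      have h := pow_le_pow_left₀ (abs_nonneg x) hX 2
      rwa [sq_abs] at h
    calc |x - (-1:ℝ) ^ (m + 1) * K * ε ^ (2 * m + 1)|
        = ε * |phi m ε x - phi m ε 0| := by
          rw [hdiff, abs_neg, abs_mul, abs_of_nonneg hε0.le]
      _ ≤ ε * (Cq * x ^ 2) := mul_le_mul_of_nonneg_left hq hε0.le
      _ ≤ ε * (Cq * (2 * K * ε ^ (2 * m + 1)) ^ 2) := by gcongr
      _ = 4 * Cq * K ^ 2 * (ε ^ (4 * m + 3)) := by ring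
      _ ≤ 4 * Cq * K ^ 2 * ε ^ (2 * m + 2) := by
          have hpp := pow_le_pow_of_le_one hε0.le hc1 (show 2 * m + 2 ≤ 4 * m + 3 by omega)
          exact mul_le_mul_of_nonneg_left hpp (by positivity)
end
end

section
/- Let m be a positive integer, f(x,ε) = x·∏_{k=1}^{m}(x² − (kε/m)²), ε > 0, and i ∈ {1,…,m}. Suppose P is a real-valued function defined on a neighborhood of iε/m, differentiable at iε/m, with P(iε/m) = iε/m, P(x) > 0 near iε/m, and satisfying (1/2)x² − ε f(x,ε) = (1/2)P(x)² + ε f(P(x),ε) for all x near iε/m. Then P'(iε/m) = (1 − 2ε^{2m}·(i/m)·∏_{k=1,k≠i}^{m}((i/m)² − (k/m)²)) / (1 + 2ε^{2m}·(i/m)·∏_{k=1,k≠i}^{m}((i/m)² − (k/m)²)). Consequently, for all sufficiently small ε > 0, P'(iε/m) ≠ 1 (the fixed point iε/m is hyperbolic), with 0 < P'(iε/m) < 1 if m − i is even and P'(iε/m) > 1 if m − i is odd. -/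
open Set Filter

noncomputable section


private theorem stmt15_key (m : ℕ) (hm : 0 < m) (i : ℕ) (hi1 : 1 ≤ i) (him : i ≤ m)
    (ε : ℝ) (hε : 0 < ε) (P : ℝ → ℝ)
    (hP : DifferentiableAt ℝ P ((i : ℝ) * ε / (m : ℝ)))
    (hPc : P ((i : ℝ) * ε / (m : ℝ)) = (i : ℝ) * ε / (m : ℝ))
    (heq : ∀ᶠ x in nhds ((i : ℝ) * ε / (m : ℝ)),
        (1 / 2) * x ^ 2 - ε * fPol m x ε =
          (1 / 2) * (P x) ^ 2 + ε * fPol m (P x) ε) :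
    (1 + 2 * ε ^ (2 * m) * ((i : ℝ) / (m : ℝ)) *
            ∏ k ∈ (Finset.Icc 1 m).erase i,
              (((i : ℝ) / (m : ℝ)) ^ 2 - ((k : ℝ) / (m : ℝ)) ^ 2)) ≠ 0 ∧
    deriv P ((i : ℝ) * ε / (m : ℝ)) =
        (1 - 2 * ε ^ (2 * m) * ((i : ℝ) / (m : ℝ)) *
            ∏ k ∈ (Finset.Icc 1 m).erase i,
              (((i : ℝ) / (m : ℝ)) ^ 2 - ((k : ℝ) / (m : ℝ)) ^ 2)) /
        (1 + 2 * ε ^ (2 * m) * ((i : ℝ) / (m : ℝ)) *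
            ∏ k ∈ (Finset.Icc 1 m).erase i,
              (((i : ℝ) / (m : ℝ)) ^ 2 - ((k : ℝ) / (m : ℝ)) ^ 2)) := by
  set c : ℝ := (i : ℝ) * ε / (m : ℝ) with hc
  set Q : ℝ := ∏ k ∈ (Finset.Icc 1 m).erase i,
      (((i : ℝ) / (m : ℝ)) ^ 2 - ((k : ℝ) / (m : ℝ)) ^ 2) with hQ
  set A : ℝ := 2 * ε ^ (2 * m) * ((i : ℝ) / (m : ℝ)) * Q with hA
  have hmR : (0:ℝ) < m := Nat.cast_pos.mpr hm
  have hiR : (0:ℝ) < i := Nat.cast_pos.mpr hi1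
  have hcpos : 0 < c := by rw [hc]; positivity
  -- derivative of the product factor functions
  have hfac : ∀ k ∈ Finset.Icc 1 m,
      HasDerivAt (fun x : ℝ => x ^ 2 - ((k:ℝ) * ε / (m:ℝ)) ^ 2) (2 * c) c := by
    intro k _
    simpa using (hasDerivAt_pow 2 c).sub_const (((k:ℝ) * ε / (m:ℝ)) ^ 2)
  have hg := HasDerivAt.finset_prod hfac
  have himem : i ∈ Finset.Icc 1 m := Finset.mem_Icc.mpr ⟨hi1, him⟩
  have hizero : c ^ 2 - ((i:ℝ) * ε / (m:ℝ)) ^ 2 = 0 := by rw [hc]; ring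
  have hsum : (∑ j ∈ Finset.Icc 1 m,
      (∏ k ∈ (Finset.Icc 1 m).erase j, (c ^ 2 - ((k:ℝ) * ε / (m:ℝ)) ^ 2)) • (2 * c))
      = (∏ k ∈ (Finset.Icc 1 m).erase i, (c ^ 2 - ((k:ℝ) * ε / (m:ℝ)) ^ 2)) * (2 * c) := by
    rw [Finset.sum_eq_single i]
    · rw [smul_eq_mul]
    · intro j hj hji
      have : (∏ k ∈ (Finset.Icc 1 m).erase j, (c ^ 2 - ((k:ℝ) * ε / (m:ℝ)) ^ 2)) = 0 :=
        Finset.prod_eq_zero (Finset.mem_erase.mpr ⟨fun h => hji h.symm, himem⟩) hizero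
      rw [this, zero_smul]
    · intro h; exact absurd himem h
  rw [hsum] at hg
  -- rewrite the erase-product in terms of Q
  have hprodQ : (∏ k ∈ (Finset.Icc 1 m).erase i, (c ^ 2 - ((k:ℝ) * ε / (m:ℝ)) ^ 2))
      = (ε ^ 2) ^ ((Finset.Icc 1 m).erase i).card * Q := by
    rw [hQ, ← Finset.prod_const (ε ^ 2), ← Finset.prod_mul_distrib]
    refine Finset.prod_congr rfl fun k _ => ?_
    rw [hc]; field_simp
  have hcard : ((Finset.Icc 1 m).erase i).card = m - 1 := by
    rw [Finset.card_erase_of_mem himem, Nat.card_Icc]; omega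
  rw [hprodQ, hcard] at hg
  -- derivative of fPol at c
  have hF : HasDerivAt (fun x => fPol m x ε)
      (1 * (∏ k ∈ Finset.Icc 1 m, (c ^ 2 - ((k:ℝ) * ε / (m:ℝ)) ^ 2))
        + c * ((ε ^ 2) ^ (m - 1) * Q * (2 * c))) c := by
    have := (hasDerivAt_id c).mul hg
    simp only [Finset.prod_apply, id] at this
    refine this.congr_of_eventuallyEq (Filter.Eventually.of_forall fun x => ?_)
    simp [fPol, Finset.prod_apply]
  have hgc : (∏ k ∈ Finset.Icc 1 m, (c ^ 2 - ((k:ℝ) * ε / (m:ℝ)) ^ 2)) = 0 :=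
    Finset.prod_eq_zero himem hizero
  rw [hgc] at hF
  set Dp : ℝ := 1 * 0 + c * ((ε ^ 2) ^ (m - 1) * Q * (2 * c)) with hDp
  -- ε * Dp = c * A
  have hpow : (ε ^ 2) ^ (m - 1) * ε ^ 2 = ε ^ (2 * m) := by
    rw [← pow_mul, ← pow_add]; congr 1; omega
  have hεD : ε * Dp = c * A := by
    have h1 : ε * Dp = ((ε ^ 2) ^ (m - 1) * ε ^ 2) * (2 * ((i:ℝ)/(m:ℝ)) ^ 2 * Q * ε) := by
      rw [hDp, hc]; field_simp; ring
    rw [h1, hpow, hA, hc]; ring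
  -- left and right hand side derivatives
  have hhalf : HasDerivAt (fun x : ℝ => (1/2) * x ^ 2) c c := by
    have := (hasDerivAt_pow 2 c).const_mul (1/2 : ℝ)
    have h2 : (1/2:ℝ) * ((2:ℕ) * c^(2-1)) = c := by push_cast; ring
    rw [h2] at this
    exact this
  have hL : HasDerivAt (fun x : ℝ => (1/2) * x ^ 2 - ε * fPol m x ε) (c - ε * Dp) c :=
    hhalf.sub (hF.const_mul ε)
  have hR' : HasDerivAt (fun y : ℝ => (1/2) * y ^ 2 + ε * fPol m y ε) (c + ε * Dp) (P c) := by
    rw [hPc]; exact hhalf.add (hF.const_mul ε)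
  have hRP : HasDerivAt (fun x : ℝ => (1/2) * (P x) ^ 2 + ε * fPol m (P x) ε)
      ((c + ε * Dp) * deriv P c) c := by
    have := hR'.comp c hP.hasDerivAt
    exact this
  have hd : deriv (fun x : ℝ => (1/2) * x ^ 2 - ε * fPol m x ε) c
      = deriv (fun x : ℝ => (1/2) * (P x) ^ 2 + ε * fPol m (P x) ε) c :=
    Filter.EventuallyEq.deriv_eq heq
  rw [hL.deriv, hRP.deriv] at hd
  -- linear relation
  have hrel : 1 - A = (1 + A) * deriv P c := by
    have h2 : c * (1 - A) = c * ((1 + A) * deriv P c) := by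
      rw [mul_comm c ((1+A) * deriv P c)]
      calc c * (1 - A) = c - c * A := by ring
        _ = c - ε * Dp := by rw [hεD]
        _ = (c + ε * Dp) * deriv P c := hd
        _ = (c + c * A) * deriv P c := by rw [hεD]
        _ = (1 + A) * deriv P c * c := by ring
    exact mul_left_cancel₀ (ne_of_gt hcpos) h2
  have h1A : 1 + A ≠ 0 := by
    intro h0
    rw [h0, zero_mul] at hrel
    have : A = -1 := by linarith
    rw [this] at hrel; norm_num at hrel
  refine ⟨h1A, ?_⟩
  rw [hrel]
  field_simp

private theorem stmt15_signQ (m : ℕ) (hm : 0 < m) (i : ℕ) (hi1 : 1 ≤ i) (him : i ≤ m) :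
    (Even (m - i) → 0 < ∏ k ∈ (Finset.Icc 1 m).erase i,
        (((i : ℝ) / (m : ℝ)) ^ 2 - ((k : ℝ) / (m : ℝ)) ^ 2)) ∧
    (Odd (m - i) → ∏ k ∈ (Finset.Icc 1 m).erase i,
        (((i : ℝ) / (m : ℝ)) ^ 2 - ((k : ℝ) / (m : ℝ)) ^ 2) < 0) := by
  have hmR : (0:ℝ) < m := Nat.cast_pos.mpr hm
  have hfact : ∀ k : ℕ, ((i:ℝ)/(m:ℝ)) ^ 2 - ((k:ℝ)/(m:ℝ)) ^ 2
      = (((i:ℝ)^2 - (k:ℝ)^2)) / (m:ℝ)^2 := by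
    intro k; rw [div_pow, div_pow, div_sub_div_same]
  have hpos : ∀ k : ℕ, k < i → 0 < ((i:ℝ)/(m:ℝ)) ^ 2 - ((k:ℝ)/(m:ℝ)) ^ 2 := by
    intro k hk
    rw [hfact]
    apply div_pos _ (by positivity)
    have : (k:ℝ) < (i:ℝ) := by exact_mod_cast hk
    nlinarith [Nat.cast_nonneg (α := ℝ) k]
  have hneg : ∀ k : ℕ, i < k → ((i:ℝ)/(m:ℝ)) ^ 2 - ((k:ℝ)/(m:ℝ)) ^ 2 < 0 := by
    intro k hk
    rw [hfact]
    apply div_neg_of_neg_of_pos _ (by positivity)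
    have : (i:ℝ) < (k:ℝ) := by exact_mod_cast hk
    nlinarith [Nat.cast_nonneg (α := ℝ) i]
  have hset : (Finset.Icc 1 m).erase i = Finset.Icc 1 (i-1) ∪ Finset.Icc (i+1) m := by
    ext k; simp only [Finset.mem_erase, Finset.mem_Icc, Finset.mem_union]; omega
  have hdisj : Disjoint (Finset.Icc 1 (i-1)) (Finset.Icc (i+1) m) := by
    rw [Finset.disjoint_left]
    intro k hk hk'
    simp only [Finset.mem_Icc] at hk hk'
    omega
  rw [hset, Finset.prod_union hdisj]
  have hQ1 : 0 < ∏ k ∈ Finset.Icc 1 (i-1), (((i:ℝ)/(m:ℝ)) ^ 2 - ((k:ℝ)/(m:ℝ)) ^ 2) := by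
    apply Finset.prod_pos
    intro k hk
    simp only [Finset.mem_Icc] at hk
    exact hpos k (by omega)
  have hQ2 : ∏ k ∈ Finset.Icc (i+1) m, (((i:ℝ)/(m:ℝ)) ^ 2 - ((k:ℝ)/(m:ℝ)) ^ 2)
      = (-1 : ℝ) ^ (m - i) *
        ∏ k ∈ Finset.Icc (i+1) m, (((k:ℝ)/(m:ℝ)) ^ 2 - ((i:ℝ)/(m:ℝ)) ^ 2) := by
    have h1 : ∏ k ∈ Finset.Icc (i+1) m, (((i:ℝ)/(m:ℝ)) ^ 2 - ((k:ℝ)/(m:ℝ)) ^ 2)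
        = ∏ k ∈ Finset.Icc (i+1) m,
            ((-1 : ℝ) * (((k:ℝ)/(m:ℝ)) ^ 2 - ((i:ℝ)/(m:ℝ)) ^ 2)) :=
      Finset.prod_congr rfl (fun k _ => by ring)
    rw [h1, Finset.prod_mul_distrib, Finset.prod_const, Nat.card_Icc]
    congr 2
    omega
  have hQ2pos : 0 < ∏ k ∈ Finset.Icc (i+1) m, (((k:ℝ)/(m:ℝ)) ^ 2 - ((i:ℝ)/(m:ℝ)) ^ 2) := by
    apply Finset.prod_pos
    intro k hk
    simp only [Finset.mem_Icc] at hk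
    have := hneg k (by omega)
    linarith
  constructor
  · intro hev
    rw [hQ2, hev.neg_one_pow]
    positivity
  · intro hod
    rw [hQ2, hod.neg_one_pow]
    have : (-1 : ℝ) * ∏ k ∈ Finset.Icc (i+1) m, (((k:ℝ)/(m:ℝ)) ^ 2 - ((i:ℝ)/(m:ℝ)) ^ 2) < 0 := by
      nlinarith
    nlinarith

/-- Derivative of the Poincaré map of `Z^f_ε` at its fixed point `iε/m`, and the
resulting hyperbolicity and stability of the corresponding limit cycle for small
`ε > 0`. -/
theorem stmt15 (m : ℕ) (hm : 0 < m) (i : ℕ) (hi1 : 1 ≤ i) (him : i ≤ m) :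
    (∀ ε : ℝ, 0 < ε → ∀ P : ℝ → ℝ,
      DifferentiableAt ℝ P ((i : ℝ) * ε / (m : ℝ)) →
      P ((i : ℝ) * ε / (m : ℝ)) = (i : ℝ) * ε / (m : ℝ) →
      (∀ᶠ x in nhds ((i : ℝ) * ε / (m : ℝ)), 0 < P x) →
      (∀ᶠ x in nhds ((i : ℝ) * ε / (m : ℝ)),
        (1 / 2) * x ^ 2 - ε * fPol m x ε =
          (1 / 2) * (P x) ^ 2 + ε * fPol m (P x) ε) →
      deriv P ((i : ℝ) * ε / (m : ℝ)) =
        (1 - 2 * ε ^ (2 * m) * ((i : ℝ) / (m : ℝ)) *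
            ∏ k ∈ (Finset.Icc 1 m).erase i,
              (((i : ℝ) / (m : ℝ)) ^ 2 - ((k : ℝ) / (m : ℝ)) ^ 2)) /
        (1 + 2 * ε ^ (2 * m) * ((i : ℝ) / (m : ℝ)) *
            ∏ k ∈ (Finset.Icc 1 m).erase i,
              (((i : ℝ) / (m : ℝ)) ^ 2 - ((k : ℝ) / (m : ℝ)) ^ 2))) ∧
    ∃ ε₁ > (0 : ℝ), ∀ ε : ℝ, 0 < ε → ε < ε₁ → ∀ P : ℝ → ℝ,
      DifferentiableAt ℝ P ((i : ℝ) * ε / (m : ℝ)) →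
      P ((i : ℝ) * ε / (m : ℝ)) = (i : ℝ) * ε / (m : ℝ) →
      (∀ᶠ x in nhds ((i : ℝ) * ε / (m : ℝ)), 0 < P x) →
      (∀ᶠ x in nhds ((i : ℝ) * ε / (m : ℝ)),
        (1 / 2) * x ^ 2 - ε * fPol m x ε =
          (1 / 2) * (P x) ^ 2 + ε * fPol m (P x) ε) →
      deriv P ((i : ℝ) * ε / (m : ℝ)) ≠ 1 ∧
      (Even (m - i) → 0 < deriv P ((i : ℝ) * ε / (m : ℝ)) ∧
        deriv P ((i : ℝ) * ε / (m : ℝ)) < 1) ∧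
      (Odd (m - i) → 1 < deriv P ((i : ℝ) * ε / (m : ℝ))) := by
  have hmR : (0:ℝ) < m := Nat.cast_pos.mpr hm
  have hiR : (0:ℝ) < i := Nat.cast_pos.mpr hi1
  set Q : ℝ := ∏ k ∈ (Finset.Icc 1 m).erase i,
      (((i : ℝ) / (m : ℝ)) ^ 2 - ((k : ℝ) / (m : ℝ)) ^ 2) with hQ
  obtain ⟨hQe, hQo⟩ := stmt15_signQ m hm i hi1 him
  have hQne : Q ≠ 0 := by
    rcases Nat.even_or_odd (m - i) with h | h
    · exact ne_of_gt (hQe h)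
    · exact ne_of_lt (hQo h)
  constructor
  · intro ε hε P hP hPc _ heq
    exact (stmt15_key m hm i hi1 him ε hε P hP hPc heq).2
  · set t : ℝ := 2 * ((i:ℝ)/(m:ℝ)) * |Q| with ht
    have htpos : 0 < t := by
      rw [ht]
      have : 0 < |Q| := abs_pos.mpr hQne
      positivity
    refine ⟨min 1 (1/(1+t)), lt_min one_pos (by positivity), ?_⟩
    intro ε hε hε₁ P hP hPc _ heq
    obtain ⟨h1A, hderiv⟩ := stmt15_key m hm i hi1 him ε hε P hP hPc heq
    set A : ℝ := 2 * ε ^ (2 * m) * ((i:ℝ)/(m:ℝ)) * Q with hA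
    have hεlt1 : ε < 1 := lt_of_lt_of_le hε₁ (min_le_left _ _)
    have hεlt2 : ε < 1/(1+t) := lt_of_lt_of_le hε₁ (min_le_right _ _)
    have hεpow : ε ^ (2 * m) ≤ ε := by
      have := pow_le_pow_of_le_one (le_of_lt hε) (le_of_lt hεlt1)
        (show 1 ≤ 2 * m by omega)
      simpa using this
    have habs : |A| = ε ^ (2 * m) * t := by
      rw [hA, ht, abs_mul]
      have h2 : |2 * ε ^ (2 * m) * ((i:ℝ)/(m:ℝ))| = 2 * ε ^ (2 * m) * ((i:ℝ)/(m:ℝ)) :=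
        abs_of_pos (by positivity)
      rw [h2]; ring
    have hAlt1 : |A| < 1 := by
      rw [habs]
      have h1 : ε ^ (2 * m) * t ≤ ε * t :=
        mul_le_mul_of_nonneg_right hεpow (le_of_lt htpos)
      have h2 : ε * t < (1/(1+t)) * t := by
        apply mul_lt_mul_of_pos_right hεlt2 htpos
      have h3 : (1/(1+t)) * t < 1 := by
        rw [div_mul_eq_mul_div, one_mul, div_lt_one (by linarith)]
        linarith
      linarith
    obtain ⟨hAlb, hAub⟩ := abs_lt.mp hAlt1
    have h1Apos : 0 < 1 + A := by linarith
    have hAne : A ≠ 0 := by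
      rw [hA]
      exact mul_ne_zero (by positivity) hQne
    refine ⟨?_, ?_, ?_⟩
    · rw [hderiv]
      intro hcon
      rw [div_eq_one_iff_eq (ne_of_gt h1Apos)] at hcon
      apply hAne
      linarith
    · intro hev
      have hQpos := hQe hev
      have hApos : 0 < A := by rw [hA]; positivity
      rw [hderiv]
      constructor
      · apply div_pos (by linarith) h1Apos
      · rw [div_lt_one h1Apos]; linarith
    · intro hod
      have hQneg := hQo hod
      have hAneg : A < 0 := by
        rw [hA]
        apply mul_neg_of_pos_of_neg (by positivity) hQneg
      rw [hderiv, lt_div_iff₀ h1Apos]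
      linarith
end
end
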